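/- For any bounded measurable set F ⊆ ℝ^p and any (p-1)-dimensional hyperplane L with unit normal vector v, for Lebesgue-almost every t ∈ ℝ the upper box dimension of the slice (L + tv) ∩ F is at most max{0, (upper box dimension of F) − 1}. -/

import Mathlib

open Set Metric MeasureTheory Filter

noncomputable section

abbrev Euc (p : ℕ) := EuclideanSpace ℝ (Fin p)

/-- The closed dyadic grid cube of side `2^{-N}` indexed by `k`. -/
def gridCube (p : ℕ) (N : ℕ) (k : Fin p → ℤ) : Set (Euc p) :=
  {x | ∀ i, (k i : ℝ) * (2 : ℝ) ^ (-(N : ℤ)) ≤ x i ∧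
        x i ≤ ((k i : ℝ) + 1) * (2 : ℝ) ^ (-(N : ℤ))}

/-- The number of closed `2^{-N}` grid cubes intersected by `F`. -/
def cubeCount (p : ℕ) (F : Set (Euc p)) (N : ℕ) : ℕ :=
  Set.ncard {k : Fin p → ℤ | (gridCube p N k ∩ F).Nonempty}

/-- The upper box (Minkowski) dimension, via dyadic cube counting. -/
def upperBoxDim (p : ℕ) (F : Set (Euc p)) : ℝ :=
  Filter.limsup (fun N : ℕ => Real.logb 2 (cubeCount p F N) / N) Filter.atTop

namespace Stmt4Aux
open scoped ENNReal NNReal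

/-- side length -/
def delta (N : ℕ) : ℝ := (2:ℝ) ^ (-(N:ℤ))

lemma delta_pos (N : ℕ) : 0 < delta N := zpow_pos two_pos _

variable (p : ℕ)

/-- the lower corner of a grid cube -/
def corner (N : ℕ) (k : Fin p → ℤ) : Euc p :=
  (WithLp.equiv 2 (Fin p → ℝ)).symm (fun i => (k i : ℝ) * delta N)

lemma corner_apply (N : ℕ) (k : Fin p → ℤ) (i : Fin p) :
    corner p N k i = (k i : ℝ) * delta N := rfl

lemma corner_mem (N : ℕ) (k : Fin p → ℤ) : corner p N k ∈ gridCube p N k := by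
  intro i
  rw [corner_apply]
  simp only [delta]
  refine ⟨le_refl _, ?_⟩
  nlinarith [zpow_pos (two_pos (α := ℝ)) (-(N:ℤ))]

lemma dist_le_of_mem {N : ℕ} {k : Fin p → ℤ} {x y : Euc p}
    (hx : x ∈ gridCube p N k) (hy : y ∈ gridCube p N k) :
    ‖x - y‖ ≤ Real.sqrt p * delta N := by
  rw [EuclideanSpace.norm_eq]
  have h : ∀ i, ‖(x - y) i‖ ^ 2 ≤ (delta N)^2 := by
    intro i
    have hxi := hx i; have hyi := hy i
    have : |x i - y i| ≤ delta N := by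
      simp only [delta] at *
      rw [abs_sub_le_iff]
      constructor <;> nlinarith
    calc ‖(x - y) i‖ ^ 2 = |x i - y i| ^ 2 := by
          rw [Real.norm_eq_abs, sq_abs, sq_abs]; rfl
      _ ≤ (delta N)^2 := by
          apply sq_le_sq' <;> nlinarith [abs_nonneg (x i - y i), (delta_pos N).le]
  calc Real.sqrt (∑ i, ‖(x - y) i‖ ^ 2) ≤ Real.sqrt (∑ _i : Fin p, (delta N)^2) := by
        apply Real.sqrt_le_sqrt; exact Finset.sum_le_sum fun i _ => h i
    _ = Real.sqrt p * delta N := by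
        rw [Finset.sum_const, Finset.card_univ, Fintype.card_fin, nsmul_eq_mul,
          Real.sqrt_mul (by positivity), Real.sqrt_sq (delta_pos N).le]

variable (v : Euc p) (c : ℝ)

/-- the hyperplane slice at level `c + t` -/
def slice (t : ℝ) : Set (Euc p) := {x : Euc p | (inner ℝ x v : ℝ) = c + t}

def gval (N : ℕ) (k : Fin p → ℤ) : ℝ := (inner ℝ (corner p N k) v : ℝ)

/-- an interval capturing all `t` whose slice can meet the cube `k` -/
def Ik (N : ℕ) (k : Fin p → ℤ) : Set ℝ :=
  Icc (gval p v N k - c - Real.sqrt p * delta N) (gval p v N k - c + Real.sqrt p * delta N)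

lemma Ik_measurable (N : ℕ) (k : Fin p → ℤ) : MeasurableSet (Ik p v c N k) :=
  measurableSet_Icc

lemma mem_Ik (hv : ‖v‖ = 1) {N : ℕ} {k : Fin p → ℤ} {t : ℝ}
    (h : (gridCube p N k ∩ slice p v c t).Nonempty) : t ∈ Ik p v c N k := by
  obtain ⟨x, hxk, hxs⟩ := h
  have hclose : |(inner ℝ x v : ℝ) - gval p v N k| ≤ Real.sqrt p * delta N := by
    rw [gval, ← inner_sub_left]
    calc |(inner ℝ (x - corner p N k) v : ℝ)| ≤ ‖x - corner p N k‖ * ‖v‖ :=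
        abs_real_inner_le_norm _ _
      _ ≤ Real.sqrt p * delta N := by
        rw [hv, mul_one]; exact dist_le_of_mem p hxk (corner_mem p N k)
  have hxs' : (inner ℝ x v : ℝ) = c + t := hxs
  rw [abs_le] at hclose
  constructor <;> [linarith; linarith]

/-- the set of cubes meeting `F` -/
def Sset (F : Set (Euc p)) (N : ℕ) : Set (Fin p → ℤ) :=
  {k : Fin p → ℤ | (gridCube p N k ∩ F).Nonempty}

lemma abs_coord_le_norm (x : Euc p) (i : Fin p) : |x i| ≤ ‖x‖ := by
  rw [EuclideanSpace.norm_eq]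
  have h : |x i|^2 ≤ ∑ j, ‖x j‖^2 := by
    rw [← Real.norm_eq_abs]
    exact Finset.single_le_sum (f := fun j => ‖x j‖^2) (fun j _ => by positivity)
      (Finset.mem_univ i)
  nlinarith [Real.sq_sqrt (Finset.sum_nonneg (fun j (_ : j ∈ Finset.univ) =>
    sq_nonneg ‖x j‖)), Real.sqrt_nonneg (∑ j, ‖x j‖^2), abs_nonneg (x i)]

lemma Sset_subset (F : Set (Euc p)) {R : ℝ} (hFR : F ⊆ closedBall 0 R) (N : ℕ) :
    Sset p F N ⊆ Set.pi Set.univ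
      (fun _ : Fin p => Set.Icc (-((⌈R⌉₊:ℤ) * 2^N) - 1) ((⌈R⌉₊:ℤ) * 2^N)) := by
  rintro k ⟨x, hxk, hxF⟩
  have hxR : ‖x‖ ≤ R := by simpa using hFR hxF
  rw [Set.mem_univ_pi]
  intro i
  have hxi : |x i| ≤ R := (abs_coord_le_norm p x i).trans hxR
  have hk := hxk i
  have hδ : (0:ℝ) < (2:ℝ) ^ (-(N:ℤ)) := zpow_pos two_pos _
  have hpow : (0:ℝ) < (2:ℝ)^(N:ℕ) := by positivity
  have hprod : (2:ℝ) ^ (-(N:ℤ)) * (2:ℝ)^(N:ℕ) = 1 := by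
    rw [← zpow_natCast (2:ℝ) N, ← zpow_add₀ (two_ne_zero (α := ℝ))]
    simp
  have hRc : R ≤ (⌈R⌉₊:ℝ) := Nat.le_ceil R
  have hxle : x i ≤ R := (abs_le.mp hxi).2
  have hxge : -R ≤ x i := (abs_le.mp hxi).1
  constructor
  · have h1 : -(⌈R⌉₊:ℝ) ≤ ((k i:ℝ) + 1) * (2:ℝ)^(-(N:ℤ)) := by linarith [hk.2]
    have h2 := mul_le_mul_of_nonneg_right h1 hpow.le
    have : -(((⌈R⌉₊:ℤ) * 2^N : ℤ):ℝ) - 1 ≤ (k i : ℝ) := by push_cast; nlinarith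
    exact_mod_cast this
  · have h1 : (k i:ℝ) * (2:ℝ)^(-(N:ℤ)) ≤ (⌈R⌉₊:ℝ) := by linarith [hk.1]
    have h2 := mul_le_mul_of_nonneg_right h1 hpow.le
    have : (k i : ℝ) ≤ (((⌈R⌉₊:ℤ) * 2^N : ℤ):ℝ) := by push_cast; nlinarith
    exact_mod_cast this

lemma Sset_finite (F : Set (Euc p)) {R : ℝ} (hFR : F ⊆ closedBall 0 R) (N : ℕ) :
    (Sset p F N).Finite :=
  Set.Finite.subset (Set.Finite.pi (fun _ => Set.finite_Icc _ _)) (Sset_subset p F hFR N)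

/-- global cube count bound -/
lemma cubeCount_le (F : Set (Euc p)) {R : ℝ} (hFR : F ⊆ closedBall 0 R) (N : ℕ) :
    cubeCount p F N ≤ ((2 * ⌈R⌉₊ + 2) * 2^N)^p := by
  classical
  set K : ℤ := (⌈R⌉₊:ℤ) * 2^N with hK
  have h1 : cubeCount p F N ≤ (Set.pi Set.univ
      (fun _ : Fin p => Set.Icc (-K - 1) K)).ncard :=
    Set.ncard_le_ncard (Sset_subset p F hFR N)
      (Set.Finite.pi fun _ => Set.finite_Icc _ _)
  refine h1.trans ?_
  have h2 : (Set.pi Set.univ (fun _ : Fin p => Set.Icc (-K - 1) K)).ncard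
      = ((Finset.Icc (-K-1) K).card)^p := by
    rw [← Finset.coe_Icc, ← Fintype.coe_piFinset, Set.ncard_coe_finset,
      Fintype.card_piFinset]
    simp [Finset.prod_const]
  rw [h2]
  apply Nat.pow_le_pow_left
  rw [Int.card_Icc]
  have heq : (K + 1 - (-K - 1)) = 2*K + 2 := by ring
  rw [heq]
  have hp1 : (1:ℤ) ≤ 2^N := one_le_pow₀ (by norm_num)
  have hC : (0:ℤ) ≤ (⌈R⌉₊:ℤ) := Int.natCast_nonneg _
  zify
  rw [Int.toNat_of_nonneg (by positivity)]
  push_cast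
  nlinarith


lemma logb_div_bounded (F : Set (Euc p)) {R : ℝ} (hFR : F ⊆ closedBall 0 R) :
    IsBoundedUnder (· ≤ ·) atTop (fun N => Real.logb 2 (cubeCount p F N) / N) := by
  set A : ℕ := 2*⌈R⌉₊+2 with hA
  refine ⟨(p:ℝ) * Real.logb 2 (A:ℝ) + p, ?_⟩
  rw [eventually_map, eventually_atTop]
  refine ⟨1, fun N hN => ?_⟩
  have hA1 : (1:ℝ) ≤ (A:ℝ) := by
    have : (2:ℕ) ≤ A := by omega
    exact_mod_cast Nat.one_le_iff_ne_zero.mpr (by omega)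
  have hlogA : 0 ≤ Real.logb 2 (A:ℝ) := Real.logb_nonneg one_lt_two hA1
  have hN1 : (1:ℝ) ≤ (N:ℝ) := by exact_mod_cast hN
  rcases Nat.eq_zero_or_pos (cubeCount p F N) with h0 | hpos
  · rw [h0]
    simp only [Nat.cast_zero, Real.logb_zero, zero_div]
    positivity
  · have hle : (cubeCount p F N : ℝ) ≤ (((A * 2^N)^p : ℕ) : ℝ) := by
      exact_mod_cast cubeCount_le p F hFR N
    have hcpos : (0:ℝ) < (cubeCount p F N : ℝ) := by exact_mod_cast hpos
    have hlogb : Real.logb 2 (cubeCount p F N) ≤ Real.logb 2 (((A * 2^N)^p : ℕ):ℝ) :=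
      Real.logb_le_logb_of_le one_lt_two hcpos hle
    have hcomp : Real.logb 2 (((A * 2^N)^p : ℕ):ℝ) = p * (Real.logb 2 (A:ℝ) + N) := by
      push_cast
      rw [Real.logb_pow, Real.logb_mul (by positivity) (by positivity), Real.logb_pow,
        Real.logb_self_eq_one one_lt_two]
      ring
    rw [hcomp] at hlogb
    have hNpos : (0:ℝ) < (N:ℝ) := by linarith
    show Real.logb 2 (cubeCount p F N) / N ≤ (p:ℝ) * Real.logb 2 (A:ℝ) + p
    rw [div_le_iff₀ hNpos]
    have h2 : (p:ℝ) * (Real.logb 2 (A:ℝ) + N) ≤ ((p:ℝ) * Real.logb 2 (A:ℝ) + p) * N := by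
      have hp0 : (0:ℝ) ≤ (p:ℝ) := Nat.cast_nonneg _
      nlinarith [mul_nonneg (mul_nonneg hp0 hlogA) (by linarith : (0:ℝ) ≤ (N:ℝ) - 1)]
    linarith

variable {v c} in
lemma slice_count_le (hv : ‖v‖ = 1) (F : Set (Euc p)) (N : ℕ)
    (hS : (Sset p F N).Finite) (t : ℝ) :
    (cubeCount p (slice p v c t ∩ F) N : ℝ≥0∞) ≤
      ∑ k ∈ hS.toFinset, (Ik p v c N k).indicator (fun _ => (1:ℝ≥0∞)) t := by
  classical
  have hsum : ∑ k ∈ hS.toFinset, (Ik p v c N k).indicator (fun _ => (1:ℝ≥0∞)) t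
      = ((hS.toFinset.filter (fun k => t ∈ Ik p v c N k)).card : ℝ≥0∞) := by
    rw [← Finset.sum_boole]
    apply Finset.sum_congr rfl
    intro k _
    simp [Set.indicator_apply]
  rw [hsum]
  have hsub : {k : Fin p → ℤ | (gridCube p N k ∩ (slice p v c t ∩ F)).Nonempty}
      ⊆ ↑(hS.toFinset.filter (fun k => t ∈ Ik p v c N k)) := by
    rintro k ⟨x, hxk, hxs, hxF⟩
    simp only [Finset.coe_filter, Set.mem_setOf_eq, Set.Finite.mem_toFinset]
    exact ⟨⟨x, hxk, hxF⟩, mem_Ik p v c hv ⟨x, hxk, hxs⟩⟩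
  have h2 := Set.ncard_le_ncard hsub (Finset.finite_toSet _)
  rw [Set.ncard_coe_finset] at h2
  exact_mod_cast h2

lemma lint_eq (F : Set (Euc p)) (N : ℕ) (hS : (Sset p F N).Finite) :
    ∫⁻ t, ∑ k ∈ hS.toFinset, (Ik p v c N k).indicator (fun _ => (1:ℝ≥0∞)) t
      = (cubeCount p F N) * ENNReal.ofReal (2 * (Real.sqrt p * delta N)) := by
  rw [lintegral_finset_sum _ (fun k _ => measurable_const.indicator (Ik_measurable p v c N k))]
  have h1 : ∀ k, ∫⁻ t, (Ik p v c N k).indicator (fun _ => (1:ℝ≥0∞)) t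
      = ENNReal.ofReal (2 * (Real.sqrt p * delta N)) := by
    intro k
    have : (fun t => (Ik p v c N k).indicator (fun _ => (1:ℝ≥0∞)) t)
        = (Ik p v c N k).indicator 1 := rfl
    rw [this, lintegral_indicator_one (Ik_measurable p v c N k), Ik, Real.volume_Icc]
    congr 1; ring
  simp_rw [h1]
  rw [Finset.sum_const, nsmul_eq_mul]
  congr 2
  exact (Set.ncard_eq_toFinset_card _ hS).symm

variable {v c} in
lemma measE (hv : ‖v‖ = 1) (F : Set (Euc p)) {R : ℝ} (hFR : F ⊆ closedBall 0 R)
    (N : ℕ) (s : ℝ) :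
    volume {t : ℝ | (2:ℝ)^((N:ℝ)*s) ≤ (cubeCount p (slice p v c t ∩ F) N : ℝ)}
      ≤ ENNReal.ofReal
        ((cubeCount p F N) * (2 * (Real.sqrt p * delta N)) / (2:ℝ)^((N:ℝ)*s)) := by
  have hS := Sset_finite p F hFR N
  set f : ℝ → ℝ≥0∞ :=
    fun t => ∑ k ∈ hS.toFinset, (Ik p v c N k).indicator (fun _ => (1:ℝ≥0∞)) t with hf
  have hfm : Measurable f :=
    Finset.measurable_sum _ (fun k _ => measurable_const.indicator (Ik_measurable p v c N k))
  have hMpos : (0:ℝ) < (2:ℝ)^((N:ℝ)*s) := Real.rpow_pos_of_pos two_pos _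
  set M := ENNReal.ofReal ((2:ℝ)^((N:ℝ)*s)) with hM
  have hsub : {t : ℝ | (2:ℝ)^((N:ℝ)*s) ≤ (cubeCount p (slice p v c t ∩ F) N : ℝ)}
      ⊆ {t : ℝ | M ≤ f t} := by
    intro t ht
    have h1 : M ≤ (cubeCount p (slice p v c t ∩ F) N : ℝ≥0∞) := by
      rw [hM, ← ENNReal.ofReal_natCast]
      exact ENNReal.ofReal_le_ofReal ht
    exact h1.trans (slice_count_le p hv F N hS t)
  calc volume {t : ℝ | (2:ℝ)^((N:ℝ)*s) ≤ (cubeCount p (slice p v c t ∩ F) N : ℝ)}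
      ≤ volume {t : ℝ | M ≤ f t} := measure_mono hsub
    _ ≤ (∫⁻ t, f t) / M :=
        meas_ge_le_lintegral_div hfm.aemeasurable
          (by simp [hM, ENNReal.ofReal_pos, hMpos]) (by simp [hM])
    _ = ENNReal.ofReal
        ((cubeCount p F N) * (2 * (Real.sqrt p * delta N)) / (2:ℝ)^((N:ℝ)*s)) := by
        rw [hf, lint_eq, hM, ← ENNReal.ofReal_natCast (cubeCount p F N),
          ← ENNReal.ofReal_mul (Nat.cast_nonneg _), ← ENNReal.ofReal_div_of_pos hMpos]


set_option maxHeartbeats 1000000 in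
variable {v c} in
lemma key (F : Set (Euc p)) {R : ℝ} (hFR : F ⊆ closedBall 0 R) (hv : ‖v‖ = 1)
    (ε : ℝ) (hε : 0 < ε) :
    ∀ᵐ t : ℝ, upperBoxDim p (slice p v c t ∩ F) ≤
      max 0 (upperBoxDim p F - 1) + 2*ε := by
  set d := upperBoxDim p F with hd
  set s := max 0 (d - 1) + 2*ε with hs
  have hs_pos : 0 < s := by
    have : (0:ℝ) ≤ max 0 (d-1) := le_max_left _ _
    rw [hs]; linarith
  have hev : ∀ᶠ N : ℕ in atTop, Real.logb 2 (cubeCount p F N) / N < d + ε := by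
    refine eventually_lt_of_limsup_lt ?_ (logb_div_bounded p F hFR)
    have : upperBoxDim p F < d + ε := by rw [← hd]; linarith
    exact this
  have haN : ∀ᶠ N : ℕ in atTop, (cubeCount p F N : ℝ) ≤ (2:ℝ)^((N:ℝ)*(d+ε)) := by
    filter_upwards [hev, eventually_ge_atTop 1] with N hN hN1
    rcases Nat.eq_zero_or_pos (cubeCount p F N) with h0 | hpos
    · rw [h0]; exact_mod_cast (Real.rpow_pos_of_pos two_pos _).le
    · have hNpos : (0:ℝ) < N := by exact_mod_cast hN1
      rw [div_lt_iff₀ hNpos] at hN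
      have hlg : Real.logb 2 (cubeCount p F N) ≤ (N:ℝ) * (d+ε) := by linarith
      have hc : (0:ℝ) < cubeCount p F N := by exact_mod_cast hpos
      calc (cubeCount p F N:ℝ)
          = (2:ℝ)^(Real.logb 2 (cubeCount p F N)) :=
            (Real.rpow_logb two_pos (by norm_num) hc).symm
        _ ≤ (2:ℝ)^((N:ℝ)*(d+ε)) :=
            (Real.rpow_le_rpow_left_iff one_lt_two).mpr hlg
  set E : ℕ → Set ℝ := fun N =>
    {t : ℝ | (2:ℝ)^((N:ℝ)*s) ≤ (cubeCount p (slice p v c t ∩ F) N : ℝ)} with hE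
  have hEbound : ∀ N, volume (E N) ≤ ENNReal.ofReal
      ((cubeCount p F N) * (2*(Real.sqrt p * delta N)) / (2:ℝ)^((N:ℝ)*s)) :=
    fun N => measE p hv F hFR N s
  set r := ENNReal.ofReal ((2:ℝ)^(-ε:ℝ)) with hr
  have hgeom : ∀ᶠ N : ℕ in atTop,
      volume (E N) ≤ ENNReal.ofReal (2*Real.sqrt p) * r^N := by
    filter_upwards [haN] with N hN
    refine (hEbound N).trans ?_
    rw [hr, ← ENNReal.ofReal_pow (by positivity), ← ENNReal.ofReal_mul (by positivity)]
    apply ENNReal.ofReal_le_ofReal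
    have hδ : delta N = (2:ℝ)^(-(N:ℝ)) := by
      rw [delta, ← Real.rpow_intCast]; norm_num
    have h1 : ((2:ℝ)^(-ε:ℝ))^N = (2:ℝ)^((-ε)*(N:ℝ)) := by
      rw [← Real.rpow_natCast ((2:ℝ)^(-ε:ℝ)) N, ← Real.rpow_mul (by norm_num)]
    have key0 : (2:ℝ)^((N:ℝ)*(d+ε)) * (2:ℝ)^(-(N:ℝ))
        ≤ (2:ℝ)^((-ε)*(N:ℝ)) * (2:ℝ)^((N:ℝ)*s) := by
      rw [← Real.rpow_add two_pos, ← Real.rpow_add two_pos]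
      apply (Real.rpow_le_rpow_left_iff one_lt_two).mpr
      have hmax : d - 1 ≤ max 0 (d-1) := le_max_right _ _
      have hN0 : (0:ℝ) ≤ (N:ℝ) := Nat.cast_nonneg _
      nlinarith [mul_nonneg hN0 (by linarith : (0:ℝ) ≤ max 0 (d-1) - (d-1))]
    rw [div_le_iff₀ (Real.rpow_pos_of_pos two_pos _)]
    calc (cubeCount p F N:ℝ) * (2*(Real.sqrt p * delta N))
        = (2*Real.sqrt p) * ((cubeCount p F N:ℝ) * (2:ℝ)^(-(N:ℝ))) := by
          rw [hδ]; ring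
      _ ≤ (2*Real.sqrt p) * ((2:ℝ)^((N:ℝ)*(d+ε)) * (2:ℝ)^(-(N:ℝ))) := by
          apply mul_le_mul_of_nonneg_left _ (by positivity)
          exact mul_le_mul_of_nonneg_right hN (by positivity)
      _ ≤ (2*Real.sqrt p) * ((2:ℝ)^((-ε)*(N:ℝ)) * (2:ℝ)^((N:ℝ)*s)) :=
          mul_le_mul_of_nonneg_left key0 (by positivity)
      _ = 2*Real.sqrt p * ((2:ℝ)^(-ε:ℝ))^N * (2:ℝ)^((N:ℝ)*s) := by
          rw [h1]; ring
  have hr1 : r < 1 := by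
    rw [hr]
    exact ENNReal.ofReal_lt_one.mpr
      (Real.rpow_lt_one_of_one_lt_of_neg one_lt_two (neg_lt_zero.mpr hε))
  have hsum : ∑' N, volume (E N) ≠ ⊤ := by
    obtain ⟨N₀, hN₀⟩ := eventually_atTop.mp hgeom
    have hfin : ∀ N, volume (E N) ≠ ⊤ :=
      fun N => ne_top_of_le_ne_top ENNReal.ofReal_ne_top (hEbound N)
    have hsub1 : (1:ℝ≥0∞) - r ≠ 0 :=
      fun h => absurd (tsub_eq_zero_iff_le.mp h) (not_le.mpr hr1)
    have hr0 : r ≠ 0 := by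
      rw [hr, Ne, ENNReal.ofReal_eq_zero, not_le]
      positivity
    have hrt : r ≠ ⊤ := (hr1.trans ENNReal.one_lt_top).ne
    have hrN : ∀ N : ℕ, r^N ≠ 0 := fun N => pow_ne_zero N hr0
    have hrNt : ∀ N : ℕ, r^N ≠ ⊤ := fun N => ENNReal.pow_ne_top hrt
    set C : ℝ≥0∞ := max (ENNReal.ofReal (2*Real.sqrt p))
      ((Finset.range N₀).sup (fun N => volume (E N) / r^N)) with hC
    have hCt : C ≠ ⊤ := by
      rw [hC]
      refine (max_lt ENNReal.ofReal_lt_top ?_).ne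
      refine Finset.sup_lt_iff (by simp) |>.mpr ?_
      exact fun N _ => ENNReal.div_lt_top (hfin N) (hrN N)
    have hCb : ∀ N, volume (E N) ≤ C * r^N := by
      intro N
      rcases lt_or_ge N N₀ with h|h
      · calc volume (E N) = volume (E N)/r^N * r^N :=
            (ENNReal.div_mul_cancel (hrN N) (hrNt N)).symm
          _ ≤ C * r^N := mul_le_mul_left
              (((Finset.le_sup (f := fun N => volume (E N) / r^N) (Finset.mem_range.mpr h))).trans (le_max_right _ _)) _
      · exact (hN₀ N h).trans (mul_le_mul_left (le_max_left _ _) _)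
    have hle : ∑' N, volume (E N) ≤ C * (1-r)⁻¹ := by
      calc ∑' N, volume (E N) ≤ ∑' N, C * r^N := ENNReal.tsum_le_tsum hCb
        _ = C * (1-r)⁻¹ := by rw [ENNReal.tsum_mul_left, ENNReal.tsum_geometric]
    exact ne_top_of_le_ne_top
      (ENNReal.mul_ne_top hCt (ENNReal.inv_ne_top.mpr hsub1)) hle
  have hBC := MeasureTheory.ae_finite_setOf_mem (μ := (volume : Measure ℝ)) hsum
  filter_upwards [hBC] with t ht
  have hev2 : ∀ᶠ N : ℕ in atTop, t ∉ E N := by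
    have h := Set.Finite.eventually_cofinite_notMem ht
    rwa [Nat.cofinite_eq_atTop] at h
  show upperBoxDim p (slice p v c t ∩ F) ≤ s
  rw [upperBoxDim]
  refine limsup_le_of_le ?_ ?_
  · refine isCoboundedUnder_le_of_le atTop (x := 0) ?_
    intro N
    apply div_nonneg _ (Nat.cast_nonneg N)
    rcases Nat.eq_zero_or_pos (cubeCount p (slice p v c t ∩ F) N) with h0|hpos
    · rw [h0]; simp
    · exact Real.logb_nonneg one_lt_two (by exact_mod_cast hpos)
  · filter_upwards [hev2, eventually_ge_atTop 1] with N hN hN1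
    have hNpos : (0:ℝ) < N := by exact_mod_cast hN1
    rcases Nat.eq_zero_or_pos (cubeCount p (slice p v c t ∩ F) N) with h0|hpos
    · rw [h0]
      simp only [Nat.cast_zero, Real.logb_zero, zero_div]
      exact hs_pos.le
    · have hb : (cubeCount p (slice p v c t ∩ F) N : ℝ) < (2:ℝ)^((N:ℝ)*s) := by
        simp only [hE, Set.mem_setOf_eq, not_le] at hN
        exact hN
      have hc : (0:ℝ) < (cubeCount p (slice p v c t ∩ F) N : ℝ) := by
        exact_mod_cast hpos
      have hlg : Real.logb 2 (cubeCount p (slice p v c t ∩ F) N) ≤ (N:ℝ)*s :=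
        (Real.logb_le_iff_le_rpow one_lt_two hc).mpr hb.le
      rw [div_le_iff₀ hNpos]
      linarith

end Stmt4Aux

theorem stmt4 (p : ℕ) (F : Set (Euc p))
    (hF : Bornology.IsBounded F) (hFm : MeasurableSet F)
    (v : Euc p) (hv : ‖v‖ = 1) (c : ℝ) :
    ∀ᵐ t : ℝ, upperBoxDim p ({x : Euc p | (inner ℝ x v : ℝ) = c + t} ∩ F) ≤
      max 0 (upperBoxDim p F - 1) := by
  obtain ⟨R, hFR⟩ := hF.subset_closedBall 0
  have hkey : ∀ j : ℕ, ∀ᵐ t : ℝ,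
      upperBoxDim p (Stmt4Aux.slice p v c t ∩ F) ≤
        max 0 (upperBoxDim p F - 1) + 2*((1:ℝ)/(j+1)) :=
    fun j => Stmt4Aux.key p F hFR hv (1/(j+1)) (by positivity)
  have hae := (MeasureTheory.ae_all_iff).mpr hkey
  filter_upwards [hae] with t ht
  have hslice : Stmt4Aux.slice p v c t = {x : Euc p | (inner ℝ x v : ℝ) = c + t} := rfl
  rw [← hslice]
  set x := upperBoxDim p (Stmt4Aux.slice p v c t ∩ F) with hx
  set D := max 0 (upperBoxDim p F - 1) with hD
  by_contra hlt
  push_neg at hlt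
  obtain ⟨j, hj⟩ := exists_nat_gt (2 / (x - D))
  have hxD : 0 < x - D := by linarith
  have h2 : 2 / (x - D) * (x - D) = 2 := div_mul_cancel₀ 2 hxD.ne'
  have hj1 : (0:ℝ) < (j:ℝ) + 1 := by positivity
  have hlt2 : 2*((1:ℝ)/(j+1)) < x - D := by
    rw [mul_one_div, div_lt_iff₀ hj1]
    nlinarith
  have := ht j
  linarith
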